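/- arXiv:1812.03333 — 3 statements merged into one kernel-verified Lean document; each statement's English description precedes it below -/
import Mathlib

section
/- The density f* satisfies the zero-flux identity (σ₁²/2) d/dx (x² f*(x)) = (a₁ − b₁x) f*(x) for every x > 0; consequently f* solves the stationary Fokker–Planck equation (1/2) d²/dx² (σ₁² x² f*(x)) − d/dx ((a₁ − b₁x) f*(x)) = 0 on (0,∞). -/
/-- With `c₁ = b₁ + σ₁²/2`, `a = 2c₁/σ₁²`, `b = 2a₁/σ₁²` and
`f*(x) = (b^a/Γ(a)) x^{-(a+1)} e^{-b/x}`, the density `f*` satisfies the zero-flux identity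
`(σ₁²/2) (x² f*(x))' = (a₁ − b₁ x) f*(x)` for every `x > 0`, and consequently solves the
stationary Fokker–Planck equation
`(1/2) (σ₁² x² f*(x))'' − ((a₁ − b₁ x) f*(x))' = 0` on `(0, ∞)`. -/
theorem stationary_density_solves_fokker_planck
    (a₁ b₁ σ₁ c₁ a b : ℝ) (ha₁ : 0 < a₁) (hb₁ : 0 < b₁) (hσ₁ : 0 < σ₁)
    (hc₁ : c₁ = b₁ + σ₁ ^ 2 / 2) (ha : a = 2 * c₁ / σ₁ ^ 2) (hb : b = 2 * a₁ / σ₁ ^ 2)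
    (fstar : ℝ → ℝ)
    (hfstar : ∀ x : ℝ, fstar x = (b ^ a / Real.Gamma a) * x ^ (-(a + 1)) * Real.exp (-b / x)) :
    (∀ x : ℝ, 0 < x →
      σ₁ ^ 2 / 2 * deriv (fun y : ℝ => y ^ 2 * fstar y) x = (a₁ - b₁ * x) * fstar x) ∧
    (∀ x : ℝ, 0 < x →
      (1 / 2) * deriv (deriv (fun y : ℝ => σ₁ ^ 2 * y ^ 2 * fstar y)) x
        - deriv (fun y : ℝ => (a₁ - b₁ * y) * fstar y) x = 0) := by
  set C : ℝ := b ^ a / Real.Gamma a with hC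
  have hσ2 : (σ₁ : ℝ) ^ 2 ≠ 0 := pow_ne_zero 2 hσ₁.ne'
  -- first part
  have part1 : ∀ x : ℝ, 0 < x →
      σ₁ ^ 2 / 2 * deriv (fun y : ℝ => y ^ 2 * fstar y) x = (a₁ - b₁ * x) * fstar x := by
    intro x hx
    have hxne : x ≠ 0 := hx.ne'
    have hgfun : (fun y : ℝ => y ^ 2 * fstar y)
        = fun y : ℝ => y ^ 2 * (C * y ^ (-(a + 1)) * Real.exp (-b / y)) := by
      funext y; rw [hfstar y]
    have hQ : HasDerivAt (fun y : ℝ => y ^ (-(a + 1)))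
        ((-(a + 1)) * x ^ (-(a + 1) - 1)) x :=
      Real.hasDerivAt_rpow_const (Or.inl hxne)
    have hinner : HasDerivAt (fun y : ℝ => -b / y) (b / x ^ 2) x := by
      have h := (hasDerivAt_inv hxne).const_mul (-b)
      have : (fun y : ℝ => -b / y) = fun y : ℝ => -b * y⁻¹ := by
        funext y; rw [div_eq_mul_inv]
      rw [this]
      refine h.congr_deriv ?_
      ring
    have hE : HasDerivAt (fun y : ℝ => Real.exp (-b / y))
        (Real.exp (-b / x) * (b / x ^ 2)) x := hinner.exp
    have hP : HasDerivAt (fun y : ℝ => y ^ 2) (2 * x) x := by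
      simpa using hasDerivAt_pow 2 x
    have h1 : HasDerivAt (fun y : ℝ => C * y ^ (-(a + 1)) * Real.exp (-b / y))
        ((C * ((-(a + 1)) * x ^ (-(a + 1) - 1))) * Real.exp (-b / x)
          + (C * x ^ (-(a + 1))) * (Real.exp (-b / x) * (b / x ^ 2))) x :=
      (hQ.const_mul C).mul hE
    have hg : HasDerivAt (fun y : ℝ => y ^ 2 * (C * y ^ (-(a + 1)) * Real.exp (-b / y)))
        ((2 * x) * (C * x ^ (-(a + 1)) * Real.exp (-b / x))
          + x ^ 2 * ((C * ((-(a + 1)) * x ^ (-(a + 1) - 1))) * Real.exp (-b / x)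
            + (C * x ^ (-(a + 1))) * (Real.exp (-b / x) * (b / x ^ 2)))) x := hP.mul h1
    rw [hgfun, hg.deriv, hfstar x]
    have hpow : x ^ (-(a + 1) - 1) = x ^ (-(a + 1)) / x := by
      rw [Real.rpow_sub hx, Real.rpow_one]
    rw [hpow, ha, hb, hc₁]
    set t : ℝ := x ^ (-(a + 1))
    set e : ℝ := Real.exp (-b / x)
    field_simp
    ring
  refine ⟨part1, ?_⟩
  intro x hx
  have hFG : ∀ y ∈ Set.Ioi (0 : ℝ),
      deriv (fun y : ℝ => σ₁ ^ 2 * y ^ 2 * fstar y) y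
        = 2 * ((a₁ - b₁ * y) * fstar y) := by
    intro y hy
    have hf : (fun y : ℝ => σ₁ ^ 2 * y ^ 2 * fstar y)
        = fun y : ℝ => σ₁ ^ 2 * (y ^ 2 * fstar y) := by
      funext z; ring
    rw [hf, deriv_const_mul_field]
    have := part1 y hy
    linarith
  have hEv : deriv (fun y : ℝ => σ₁ ^ 2 * y ^ 2 * fstar y)
      =ᶠ[nhds x] fun y : ℝ => 2 * ((a₁ - b₁ * y) * fstar y) := by
    filter_upwards [Ioi_mem_nhds hx] with y hy using hFG y hy
  have h2 : deriv (deriv (fun y : ℝ => σ₁ ^ 2 * y ^ 2 * fstar y)) x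
      = deriv (fun y : ℝ => 2 * ((a₁ - b₁ * y) * fstar y)) x := hEv.deriv_eq
  rw [h2, deriv_const_mul_field]
  ring
end

section
/- Under Assumption 2.1 and for parameters a₁, b₁, b₂, σ₁, σ₂ > 0, set C₁ = b₂/F and C₂ = a₁ + C₁b₁ + C₁σ₁²/2 + b₂ + σ₂²/2. Then for all s > 0 and i > 0, the generator expression ℒV(s,i) := (1 − C₁/s)(a₁ − b₁s − i·f(s,i)) + (C₁/(2s²))(σ₁²s² + i²g²(s,i)) + (1 − 1/i)(−b₂i + i·f(s,i)) + (1/(2i²))(σ₂²i² + i²g²(s,i)) satisfies ℒV(s,i) ≤ C₂ + C₁G²/2 + K²/2. In particular ℒV is bounded above on (0,∞)². -/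
/-- Under Assumption 2.1 and with `C₁ = b₂/F`,
`C₂ = a₁ + C₁b₁ + C₁σ₁²/2 + b₂ + σ₂²/2`, for all `s, i > 0` the generator expression
`ℒV(s,i)` applied to the Lyapunov function `V(s,i) = (s − C₁ − C₁ ln(s/C₁)) + (i − 1 − ln i)`
satisfies `ℒV(s,i) ≤ C₂ + C₁G²/2 + K²/2`; in particular it is bounded above on `(0,∞)²`. -/
theorem generator_bounded_above
    (a₁ b₁ b₂ σ₁ σ₂ : ℝ)
    (ha₁ : 0 < a₁) (hb₁ : 0 < b₁) (hb₂ : 0 < b₂) (hσ₁ : 0 < σ₁) (hσ₂ : 0 < σ₂)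
    (f g : ℝ → ℝ → ℝ) (F G K : ℝ) (hF : 0 < F) (hG : 0 < G) (hK : 0 < K)
    (hfnn : ∀ s i : ℝ, 0 ≤ s → 0 ≤ i → 0 ≤ f s i)
    (hgnn : ∀ s i : ℝ, 0 ≤ s → 0 ≤ i → 0 ≤ g s i)
    (hf0 : ∀ i : ℝ, 0 ≤ i → f 0 i = 0)
    (hg0 : ∀ i : ℝ, 0 ≤ i → g 0 i = 0)
    (hfLip : ∀ s₁ s₂ i₁ i₂ : ℝ, 0 ≤ s₁ → 0 ≤ s₂ → 0 ≤ i₁ → 0 ≤ i₂ →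
      |f s₁ i₁ - f s₂ i₂| ≤ F * (|s₁ - s₂| + |i₁ - i₂|))
    (hgLip : ∀ s₁ s₂ i₁ i₂ : ℝ, 0 ≤ s₁ → 0 ≤ s₂ → 0 ≤ i₁ → 0 ≤ i₂ →
      |g s₁ i₁ - g s₂ i₂| ≤ G * (|s₁ - s₂| + |i₁ - i₂|))
    (higLip : ∀ s₁ s₂ i : ℝ, 0 ≤ s₁ → 0 ≤ s₂ → 0 ≤ i →
      |i * g s₁ i - i * g s₂ i| ≤ G * |s₁ - s₂|)
    (hgK : ∀ s i : ℝ, 0 ≤ s → 0 ≤ i → g s i ≤ K)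
    (C₁ C₂ : ℝ) (hC₁ : C₁ = b₂ / F)
    (hC₂ : C₂ = a₁ + C₁ * b₁ + C₁ * σ₁ ^ 2 / 2 + b₂ + σ₂ ^ 2 / 2) :
    ∀ s i : ℝ, 0 < s → 0 < i →
      (1 - C₁ / s) * (a₁ - b₁ * s - i * f s i)
        + (C₁ / (2 * s ^ 2)) * (σ₁ ^ 2 * s ^ 2 + i ^ 2 * (g s i) ^ 2)
        + (1 - 1 / i) * (-b₂ * i + i * f s i)
        + (1 / (2 * i ^ 2)) * (σ₂ ^ 2 * i ^ 2 + i ^ 2 * (g s i) ^ 2)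
      ≤ C₂ + C₁ * G ^ 2 / 2 + K ^ 2 / 2 := by

  intro s i hs hi
  have hC₁pos : 0 < C₁ := by rw [hC₁]; positivity
  have hgnn' : 0 ≤ g s i := hgnn s i hs.le hi.le
  have hfnn' : 0 ≤ f s i := hfnn s i hs.le hi.le
  have h1 := hfLip s 0 i i hs.le le_rfl hi.le hi.le
  rw [hf0 i hi.le, sub_zero, sub_zero, sub_self, abs_zero, add_zero,
      abs_of_nonneg hfnn', abs_of_pos hs] at h1
  have h2 := higLip s 0 i hs.le le_rfl hi.le
  rw [hg0 i hi.le, mul_zero, sub_zero, sub_zero,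
      abs_of_nonneg (mul_nonneg hi.le hgnn'), abs_of_pos hs] at h2
  have hgK' := hgK s i hs.le hi.le
  have heq : (1 - C₁ / s) * (a₁ - b₁ * s - i * f s i)
        + (C₁ / (2 * s ^ 2)) * (σ₁ ^ 2 * s ^ 2 + i ^ 2 * (g s i) ^ 2)
        + (1 - 1 / i) * (-b₂ * i + i * f s i)
        + (1 / (2 * i ^ 2)) * (σ₂ ^ 2 * i ^ 2 + i ^ 2 * (g s i) ^ 2)
      = a₁ - b₁ * s - C₁ * a₁ / s + C₁ * b₁ + C₁ * i * f s i / s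
        + C₁ * σ₁ ^ 2 / 2 + C₁ * (i * g s i) ^ 2 / (2 * s ^ 2)
        - b₂ * i + b₂ - f s i + σ₂ ^ 2 / 2 + (g s i) ^ 2 / 2 := by
    field_simp
    ring
  have hA : C₁ * i * f s i / s ≤ b₂ * i := by
    have hcf : C₁ * F = b₂ := by rw [hC₁]; field_simp
    have h : C₁ * i * f s i ≤ b₂ * i * s := by
      have h3 := mul_le_mul_of_nonneg_left h1 (mul_nonneg hC₁pos.le hi.le)
      have h4 : C₁ * i * (F * s) = b₂ * i * s := by rw [← hcf]; ring
      linarith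
    calc C₁ * i * f s i / s ≤ b₂ * i * s / s := by gcongr
      _ = b₂ * i := by field_simp
  have hB : C₁ * (i * g s i) ^ 2 / (2 * s ^ 2) ≤ C₁ * G ^ 2 / 2 := by
    have hsq : (i * g s i) ^ 2 ≤ G ^ 2 * s ^ 2 := by
      have := pow_le_pow_left₀ (mul_nonneg hi.le hgnn') h2 2
      calc (i * g s i) ^ 2 ≤ (G * s) ^ 2 := this
        _ = G ^ 2 * s ^ 2 := by ring
    calc C₁ * (i * g s i) ^ 2 / (2 * s ^ 2) ≤ C₁ * (G ^ 2 * s ^ 2) / (2 * s ^ 2) := by gcongr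
      _ = C₁ * G ^ 2 / 2 := by
          rw [show C₁ * (G ^ 2 * s ^ 2) = C₁ * G ^ 2 / 2 * (2 * s ^ 2) by ring,
            mul_div_assoc, div_self (by positivity), mul_one]
  have hC : (g s i) ^ 2 / 2 ≤ K ^ 2 / 2 := by
    have := pow_le_pow_left₀ hgnn' hgK' 2
    linarith
  have hneg : 0 ≤ C₁ * a₁ / s := by positivity
  rw [heq, hC₂]
  linarith [mul_pos hb₁ hs, hfnn']
end

section
/- Let a₁, b₁, b₂, σ₁, σ₂ > 0, let 0 < p < min{2b₁/σ₁², 2b₂/σ₂²}, p̄ > 0, and let C₃ be any constant with 0 < C₃ < (1+p)·min{b₁ − (p/2)σ₁², b₂ − (p/2)σ₂², (b₁+b₂)/2}. Define V₁(s,i) = (s+i)^{1+p} + (s+i)^{−p̄} and ℒV₁(s,i) = (1+p)(s+i)^p (a₁ − b₁s − b₂i) + (p(1+p)/2)(s+i)^{p−1}(σ₁²s² + σ₂²i²) − p̄(s+i)^{−p̄−1}(a₁ − b₁s − b₂i) + (p̄(1+p̄)/2)(s+i)^{−p̄−2}(σ₁²s² + σ₂²i²). Then C₄ := sup over (s,i)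 ∈ [0,∞)² \ {(0,0)} of (ℒV₁(s,i) + C₃V₁(s,i)) is finite; equivalently, ℒV₁(s,i) ≤ C₄ − C₃V₁(s,i) for all (s,i) ∈ [0,∞)² \ {(0,0)}. -/
set_option maxHeartbeats 1000000


/-- With `V₁(s,i) = (s+i)^{1+p} + (s+i)^{−p̄}` and `ℒV₁` as displayed, for any
`0 < C₃ < (1+p)·min{b₁ − (p/2)σ₁², b₂ − (p/2)σ₂², (b₁+b₂)/2}` the supremum
`C₄ = sup_{(s,i) ∈ [0,∞)²∖{(0,0)}} (ℒV₁(s,i) + C₃V₁(s,i))` is finite; equivalently there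
is a constant `C₄` such that `ℒV₁(s,i) ≤ C₄ − C₃V₁(s,i)` off the origin. -/
theorem drift_inequality_V1
    (a₁ b₁ b₂ σ₁ σ₂ p pbar C₃ : ℝ)
    (ha₁ : 0 < a₁) (hb₁ : 0 < b₁) (hb₂ : 0 < b₂) (hσ₁ : 0 < σ₁) (hσ₂ : 0 < σ₂)
    (hp : 0 < p) (hp' : p < min (2 * b₁ / σ₁ ^ 2) (2 * b₂ / σ₂ ^ 2)) (hpbar : 0 < pbar)
    (hC₃pos : 0 < C₃)
    (hC₃ : C₃ < (1 + p) * min (b₁ - (p / 2) * σ₁ ^ 2)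
        (min (b₂ - (p / 2) * σ₂ ^ 2) ((b₁ + b₂) / 2)))
    (V₁ LV₁ : ℝ → ℝ → ℝ)
    (hV₁ : ∀ s i : ℝ, V₁ s i = (s + i) ^ (1 + p) + (s + i) ^ (-pbar))
    (hLV₁ : ∀ s i : ℝ, LV₁ s i =
      (1 + p) * (s + i) ^ p * (a₁ - b₁ * s - b₂ * i)
        + (p * (1 + p) / 2) * (s + i) ^ (p - 1) * (σ₁ ^ 2 * s ^ 2 + σ₂ ^ 2 * i ^ 2)
        - pbar * (s + i) ^ (-pbar - 1) * (a₁ - b₁ * s - b₂ * i)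
        + (pbar * (1 + pbar) / 2) * (s + i) ^ (-pbar - 2) *
            (σ₁ ^ 2 * s ^ 2 + σ₂ ^ 2 * i ^ 2)) :
    ∃ C₄ : ℝ, ∀ s i : ℝ, 0 ≤ s → 0 ≤ i → (s, i) ≠ (0, 0) →
      LV₁ s i ≤ C₄ - C₃ * V₁ s i := by
  -- abbreviations
  obtain ⟨A, hAdef⟩ : ∃ y, y = b₁ - p / 2 * σ₁ ^ 2 := ⟨_, rfl⟩
  obtain ⟨B, hBdef⟩ : ∃ y, y = b₂ - p / 2 * σ₂ ^ 2 := ⟨_, rfl⟩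
  have hA : 0 < A := by
    have h1 := (lt_min_iff.mp hp').1
    rw [lt_div_iff₀ (by positivity)] at h1
    simp only [hAdef]; linarith
  have hB : 0 < B := by
    have h1 := (lt_min_iff.mp hp').2
    rw [lt_div_iff₀ (by positivity)] at h1
    simp only [hBdef]; linarith
  obtain ⟨m, hmdef⟩ : ∃ y, y = min A (min B ((b₁ + b₂) / 2)) := ⟨_, rfl⟩
  have hm : 0 < m := by
    rw [hmdef]; exact lt_min hA (lt_min hB (by positivity))
  have hmA : m ≤ A := by rw [hmdef]; exact min_le_left _ _
  have hmB : m ≤ B := by rw [hmdef]; exact (min_le_right _ _).trans (min_le_left _ _)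
  have h1p : (0:ℝ) < 1 + p := by linarith
  obtain ⟨ε, hεdef⟩ : ∃ y, y = (1 + p) * m - C₃ := ⟨_, rfl⟩
  have hε : 0 < ε := by
    have h : C₃ < (1 + p) * m := by
      rw [hmdef, hAdef, hBdef]; convert hC₃ using 4 <;> ring
    rw [hεdef]; linarith
  obtain ⟨Bmax, hBmaxdef⟩ : ∃ y, y = max b₁ b₂ := ⟨_, rfl⟩
  obtain ⟨Smax, hSmaxdef⟩ : ∃ y, y = max (σ₁ ^ 2) (σ₂ ^ 2) := ⟨_, rfl⟩
  have hBmax : 0 < Bmax := by rw [hBmaxdef]; exact lt_max_of_lt_left hb₁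
  have hSmax : 0 < Smax := by rw [hSmaxdef]; exact lt_max_of_lt_left (by positivity)
  obtain ⟨K, hKdef⟩ : ∃ y, y = C₃ + pbar * Bmax + pbar * (1 + pbar) / 2 * Smax := ⟨_, rfl⟩
  have hK : 0 < K := by rw [hKdef]; positivity
  obtain ⟨X₀, hX₀def⟩ : ∃ y, y = (1 + p) * a₁ / ε := ⟨_, rfl⟩
  obtain ⟨x₁, hx₁def⟩ : ∃ y, y = pbar * a₁ / K := ⟨_, rfl⟩
  have hx₁ : 0 < x₁ := by rw [hx₁def]; positivity
  refine ⟨(1 + p) * a₁ * (max 1 X₀) ^ p + K * x₁ ^ (-pbar), ?_⟩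
  intro s i hs hi hne
  have hx : 0 < s + i := by
    rcases lt_or_eq_of_le (add_nonneg hs hi) with h | h
    · exact h
    · exfalso; apply hne
      have hs0 : s = 0 := by linarith
      have hi0 : i = 0 := by linarith
      simp [hs0, hi0]
  obtain ⟨x, hxdef⟩ : ∃ y, y = s + i := ⟨_, rfl⟩
  rw [← hxdef] at hx
  -- exponent relations
  have hrel1 : x ^ (1 + p) = x * x ^ p := by
    rw [Real.rpow_add hx, Real.rpow_one]
  have hrel2 : x ^ p = x * x ^ (p - 1) := by
    have h := Real.rpow_add hx 1 (p - 1)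
    rw [Real.rpow_one] at h
    rw [show (1:ℝ) + (p - 1) = p by ring] at h; exact h
  have hrelm1 : x ^ (-pbar) = x * x ^ (-pbar - 1) := by
    have h := Real.rpow_add hx 1 (-pbar - 1)
    rw [Real.rpow_one] at h
    rw [show (1:ℝ) + (-pbar - 1) = -pbar by ring] at h; exact h
  have hrelm2 : x ^ (-pbar - 1) = x * x ^ (-pbar - 2) := by
    have h := Real.rpow_add hx 1 (-pbar - 2)
    rw [Real.rpow_one] at h
    rw [show (1:ℝ) + (-pbar - 2) = -pbar - 1 by ring] at h; exact h
  have hu : (0:ℝ) ≤ x ^ (p - 1) := Real.rpow_nonneg hx.le _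
  have hw : (0:ℝ) ≤ x ^ (-pbar - 2) := Real.rpow_nonneg hx.le _
  -- Lemma A : polynomial core for positive powers
  have key1 : m * x ^ 2 + p / 2 * (σ₁ ^ 2 * s ^ 2 + σ₂ ^ 2 * i ^ 2)
      - x * (b₁ * s + b₂ * i) ≤ 0 := by
    have t1 : 0 ≤ (A - m) * (s * x) :=
      mul_nonneg (by linarith) (mul_nonneg hs hx.le)
    have t2 : 0 ≤ (B - m) * (i * x) :=
      mul_nonneg (by linarith) (mul_nonneg hi hx.le)
    have t3 : 0 ≤ p / 2 * (σ₁ ^ 2 + σ₂ ^ 2) * (s * i) :=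
      mul_nonneg (by positivity) (mul_nonneg hs hi)
    simp only [hAdef, hBdef] at t1 t2
    simp only [hxdef] at t1 t2 t3 ⊢
    linarith [t1, t2, t3]
  -- Lemma B : polynomial core for negative powers
  have key2 : x * (b₁ * s + b₂ * i) ≤ Bmax * x ^ 2 := by
    have t1 : 0 ≤ (Bmax - b₁) * (s * x) :=
      mul_nonneg (by simp [hBmaxdef]) (mul_nonneg hs hx.le)
    have t2 : 0 ≤ (Bmax - b₂) * (i * x) :=
      mul_nonneg (by simp [hBmaxdef]) (mul_nonneg hi hx.le)
    simp only [hxdef] at t1 t2 ⊢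
    linarith [t1, t2]
  have key3 : σ₁ ^ 2 * s ^ 2 + σ₂ ^ 2 * i ^ 2 ≤ Smax * x ^ 2 := by
    have t1 : 0 ≤ (Smax - σ₁ ^ 2) * s ^ 2 :=
      mul_nonneg (by simp [hSmaxdef]) (sq_nonneg s)
    have t2 : 0 ≤ (Smax - σ₂ ^ 2) * i ^ 2 :=
      mul_nonneg (by simp [hSmaxdef]) (sq_nonneg i)
    have t3 : 0 ≤ 2 * Smax * (s * i) :=
      mul_nonneg (by positivity) (mul_nonneg hs hi)
    simp only [hxdef] at t1 t2 t3 ⊢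
    linarith [t1, t2, t3]
  -- bound the positive-power block
  have hT1 : (1 + p) * x ^ p * (a₁ - b₁ * s - b₂ * i)
      + (p * (1 + p) / 2) * x ^ (p - 1) * (σ₁ ^ 2 * s ^ 2 + σ₂ ^ 2 * i ^ 2)
      + C₃ * x ^ (1 + p) ≤ (1 + p) * a₁ * (max 1 X₀) ^ p := by
    have step : (1 + p) * x ^ p * (a₁ - b₁ * s - b₂ * i)
        + (p * (1 + p) / 2) * x ^ (p - 1) * (σ₁ ^ 2 * s ^ 2 + σ₂ ^ 2 * i ^ 2)
        + C₃ * x ^ (1 + p) ≤ (1 + p) * a₁ * x ^ p - ε * x ^ (1 + p) := by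
      have t : 0 ≤ (1 + p) * x ^ (p - 1) *
          (x * (b₁ * s + b₂ * i) - m * x ^ 2
            - p / 2 * (σ₁ ^ 2 * s ^ 2 + σ₂ ^ 2 * i ^ 2)) :=
        mul_nonneg (mul_nonneg h1p.le hu) (by linarith)
      rw [hrel1, hrel2]
      simp only [hεdef]
      linarith [t]
    refine step.trans ?_
    rcases le_total x X₀ with h | h
    · have h1 : x ^ p ≤ (max 1 X₀) ^ p :=
        Real.rpow_le_rpow hx.le (h.trans (le_max_right _ _)) hp.le
      have h2 : 0 ≤ ε * x ^ (1 + p) := mul_nonneg hε.le (Real.rpow_nonneg hx.le _)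
      linarith [h2, mul_le_mul_of_nonneg_left h1 (by positivity : (0:ℝ) ≤ (1 + p) * a₁)]
    · have h3 : (1 + p) * a₁ ≤ ε * x := by
        rw [hX₀def, div_le_iff₀ hε] at h
        linarith
      have h4 : (1 + p) * a₁ * x ^ p ≤ ε * x * x ^ p :=
        mul_le_mul_of_nonneg_right h3 (Real.rpow_nonneg hx.le _)
      have h5 : 0 ≤ (1 + p) * a₁ * (max 1 X₀) ^ p := by
        have : (0:ℝ) ≤ (max 1 X₀) ^ p :=
          Real.rpow_nonneg (le_trans zero_le_one (le_max_left _ _)) _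
        positivity
      rw [hrel1]
      linarith
  -- bound the negative-power block
  have hT2 : -(pbar * x ^ (-pbar - 1) * (a₁ - b₁ * s - b₂ * i))
      + (pbar * (1 + pbar) / 2) * x ^ (-pbar - 2) * (σ₁ ^ 2 * s ^ 2 + σ₂ ^ 2 * i ^ 2)
      + C₃ * x ^ (-pbar) ≤ K * x₁ ^ (-pbar) := by
    have step : -(pbar * x ^ (-pbar - 1) * (a₁ - b₁ * s - b₂ * i))
        + (pbar * (1 + pbar) / 2) * x ^ (-pbar - 2) * (σ₁ ^ 2 * s ^ 2 + σ₂ ^ 2 * i ^ 2)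
        + C₃ * x ^ (-pbar)
        ≤ K * x ^ (-pbar) - pbar * a₁ * x ^ (-pbar - 1) := by
      have t2 : 0 ≤ pbar * x ^ (-pbar - 2) * (Bmax * x ^ 2 - x * (b₁ * s + b₂ * i)) :=
        mul_nonneg (mul_nonneg hpbar.le hw) (by linarith)
      have t3 : 0 ≤ (pbar * (1 + pbar) / 2) * x ^ (-pbar - 2) *
          (Smax * x ^ 2 - (σ₁ ^ 2 * s ^ 2 + σ₂ ^ 2 * i ^ 2)) :=
        mul_nonneg (mul_nonneg (by positivity) hw) (by linarith)
      rw [hrelm1, hrelm2]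
      simp only [hKdef]
      linarith [t2, t3]
    refine step.trans ?_
    rcases le_total x x₁ with h | h
    · have h1 : K * x ≤ pbar * a₁ := by
        rw [hx₁def, le_div_iff₀ hK] at h
        linarith
      have h2 : K * x * x ^ (-pbar - 1) ≤ pbar * a₁ * x ^ (-pbar - 1) :=
        mul_le_mul_of_nonneg_right h1 (Real.rpow_nonneg hx.le _)
      have h3 : 0 ≤ K * x₁ ^ (-pbar) :=
        mul_nonneg hK.le (Real.rpow_nonneg hx₁.le _)
      rw [hrelm1]
      linarith
    · have h1 : x ^ (-pbar) ≤ x₁ ^ (-pbar) :=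
        Real.rpow_le_rpow_of_nonpos hx₁ h (by linarith)
      have h2 : 0 ≤ pbar * a₁ * x ^ (-pbar - 1) := by
        have := Real.rpow_nonneg hx.le (-pbar - 1); positivity
      linarith [mul_le_mul_of_nonneg_left h1 hK.le]
  -- combine
  rw [hLV₁ s i, hV₁ s i]
  simp only [← hxdef]
  linarith [hT1, hT2]
end
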